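/- For every k ≥ 3 and every real x ≥ 1, the functions defined by f₃(x) = √(x/2) + (x/2)^(1/4) + 1/2 and fₖ(x) = √(2x·f_{k-1}(x) + 1/4) + 1/2 for k ≥ 4 satisfy 2·fₖ(x) > fₖ(2x). -/
import Mathlib
noncomputable def f : ℕ → ℝ → ℝ
  | k + 4, x => Real.sqrt (2 * x * f (k + 3) x + 1 / 4) + 1 / 2
  | _, x => Real.sqrt (x / 2) + (x / 2) ^ ((1 : ℝ) / 4) + 1 / 2

lemma f_half_le (k : ℕ) (x : ℝ) (hx : 0 ≤ x) : 1 / 2 ≤ f k x := by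
  match k with
  | 0 | 1 | 2 | 3 =>
    simp only [f]
    have h1 : 0 ≤ Real.sqrt (x / 2) := Real.sqrt_nonneg _
    have h2 : 0 ≤ (x / 2) ^ ((1:ℝ)/4) := Real.rpow_nonneg (by linarith) _
    linarith
  | k + 4 =>
    simp only [f]
    have h1 : 0 ≤ Real.sqrt (2 * x * f (k+3) x + 1/4) := Real.sqrt_nonneg _
    linarith

lemma key (k : ℕ) (x : ℝ) (hx : 1 ≤ x) : 2 * f (k + 3) x > f (k + 3) (2 * x) := by
  induction k generalizing x with
  | zero =>
    simp only [f]
    have hx0 : (0:ℝ) ≤ x := by linarith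
    have h1 : 2 * Real.sqrt (x / 2) = Real.sqrt (2 * x) := by
      rw [show (2:ℝ) * x = 4 * (x / 2) by ring,
        Real.sqrt_mul (by norm_num) (x/2), show Real.sqrt 4 = 2 by
          rw [show (4:ℝ) = 2^2 by norm_num, Real.sqrt_sq (by norm_num)]]
    have h2 : Real.sqrt (2 * x / 2) ≤ 2 * Real.sqrt (x / 2) := by
      rw [h1]
      exact Real.sqrt_le_sqrt (by linarith)
    have h3 : (2 * x / 2) ^ ((1:ℝ)/4) ≤ 2 * (x / 2) ^ ((1:ℝ)/4) := by
      have hxx : (2 * x / 2 : ℝ) = x := by ring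
      rw [hxx]
      have hd : ((x / 2 : ℝ)) ^ ((1:ℝ)/4) = x ^ ((1:ℝ)/4) / 2 ^ ((1:ℝ)/4) := by
        rw [Real.div_rpow hx0 (by norm_num)]
      rw [hd]
      have h24 : (2:ℝ) ^ ((1:ℝ)/4) ≤ 2 := by
        calc (2:ℝ) ^ ((1:ℝ)/4) ≤ 2 ^ (1:ℝ) :=
          Real.rpow_le_rpow_of_exponent_le (by norm_num) (by norm_num)
        _ = 2 := Real.rpow_one 2
      have h24p : (0:ℝ) < 2 ^ ((1:ℝ)/4) := Real.rpow_pos_of_pos (by norm_num) _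
      have hx4 : 0 ≤ x ^ ((1:ℝ)/4) := Real.rpow_nonneg hx0 _
      rw [mul_div_assoc', le_div_iff₀ h24p]
      nlinarith
    linarith
  | succ k ih =>
    have hx0 : (0:ℝ) < x := by linarith
    have hf1 : 1/2 ≤ f (k+3) x := f_half_le _ _ (by linarith)
    have hf2 : 1/2 ≤ f (k+3) (2*x) := f_half_le _ _ (by linarith)
    have hih := ih x hx
    show 2 * f (k + 4) x > f (k + 4) (2 * x)
    simp only [f]
    have hApos : (1:ℝ)/4 ≤ 2 * x * f (k+3) x + 1/4 := by nlinarith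
    have hsA : 1/2 ≤ Real.sqrt (2 * x * f (k+3) x + 1/4) := by
      rw [show (1:ℝ)/2 = Real.sqrt (1/4) by
        rw [show (1:ℝ)/4 = (1/2)^2 by norm_num, Real.sqrt_sq (by norm_num)]]
      exact Real.sqrt_le_sqrt hApos
    have hsq : Real.sqrt (2 * x * f (k+3) x + 1/4) ^ 2 = 2 * x * f (k+3) x + 1/4 :=
      Real.sq_sqrt (by linarith)
    have hm : x * f (k+3) (2*x) < x * (2 * f (k+3) x) := mul_lt_mul_of_pos_left hih hx0
    have hlt : Real.sqrt (2 * (2*x) * f (k+3) (2*x) + 1/4)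
        < 2 * Real.sqrt (2 * x * f (k+3) x + 1/4) + 1/2 := by
      rw [Real.sqrt_lt' (by linarith)]
      have hexp : (2 * Real.sqrt (2 * x * f (k+3) x + 1/4) + 1/2)^2
          = 4 * (2 * x * f (k+3) x + 1/4) + 2 * Real.sqrt (2 * x * f (k+3) x + 1/4) + 1/4 := by
        nlinarith [hsq]
      rw [hexp]
      linarith
    linarith

theorem stmt_15 (k : ℕ) (hk : 3 ≤ k) (x : ℝ) (hx : 1 ≤ x) :
    2 * f k x > f k (2 * x) := by
  obtain ⟨m, rfl⟩ : ∃ m, k = m + 3 := ⟨k - 3, by omega⟩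
  exact key m x hx
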